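/- (Equality in Newton's inequality for the radial solution, Lemma 2.6(i)) Let N ≥ 2, 1 < p < 2, z ∈ ℝ^N, r ∈ ℝ, and define w_r : ℝ^N → ℝ by w_r(x) := −((p−1)/(p N^{1/(p−1)})) ( |x−z|^{p/(p−1)} − r ). Then for every x ≠ z, with e := (x−z)/|x−z|, the Hessian satisfies D²w_r(x) = −N^{−1/(p−1)} |x−z|^{(2−p)/(p−1)} ( ((2−p)/(p−1)) e⊗e + I ), and consequently |∇w_r(x)|^{p−2} ( I + (p−2) e⊗e ) D²w_r(x) = −(1/N) I; in particular this matrix A := |∇w_r(x)|^{p−2} ( I + (p−2) e⊗e ) D²w_r(x) satisfies ‖A‖² = (Tr A)²/N, i.e. equality holds in Newton's inequality. -/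

import Mathlib

open Matrix Real

variable {F : Type*} [NormedAddCommGroup F] [InnerProductSpace ℝ F] [CompleteSpace F]

lemma hasGradientAt_of_innerSL {f : F → ℝ} {v x : F} (h : HasFDerivAt f (innerSL ℝ v) x) :
    HasGradientAt f v x := by
  rw [hasGradientAt_iff_hasFDerivAt]
  exact h

/-- fderiv of `y ↦ ‖y - z‖ ^ m` (rpow) at `x ≠ z`. -/
lemma hasFDerivAt_norm_sub_rpow (z x : F) (hx : x ≠ z) (m : ℝ) :
    HasFDerivAt (fun y : F => ‖y - z‖ ^ m)
      (innerSL ℝ ((m * ‖x - z‖ ^ (m - 2)) • (x - z))) x := by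
  have hxz : x - z ≠ 0 := sub_ne_zero.mpr hx
  have hd : (0:ℝ) < ‖x - z‖ := norm_pos_iff.mpr hxz
  have hg : HasFDerivAt (fun y : F => ‖y - z‖ ^ (2:ℕ))
      (2 • (innerSL ℝ (x - z))) x := by
    have := ((hasFDerivAt_id x).sub_const z).norm_sq
    simpa using this
  have ht0 : ‖x - z‖ ^ (2:ℕ) ≠ 0 := by positivity
  have hφ : HasDerivAt (fun t : ℝ => t ^ (m / 2))
      ((m / 2) * (‖x - z‖ ^ (2:ℕ)) ^ (m / 2 - 1)) (‖x - z‖ ^ (2:ℕ)) :=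
    Real.hasDerivAt_rpow_const (Or.inl ht0)
  have hcomp := hφ.comp_hasFDerivAt x hg
  have heq : (fun y : F => (‖y - z‖ ^ (2:ℕ)) ^ (m / 2)) = (fun y : F => ‖y - z‖ ^ m) := by
    funext y
    rw [← Real.rpow_natCast ‖y - z‖ 2, ← Real.rpow_mul (norm_nonneg _)]
    norm_num
    congr 1
    ring
  simp only [Function.comp_def] at hcomp
  rw [heq] at hcomp
  convert hcomp using 1
  · rfl
  · rfl
  ext u
  have h1 : (‖x - z‖ ^ (2:ℕ)) ^ (m / 2 - 1) = ‖x - z‖ ^ (m - 2) := by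
    rw [← Real.rpow_natCast ‖x - z‖ 2, ← Real.rpow_mul (norm_nonneg _)]
    ring_nf
  simp only [ContinuousLinearMap.smul_apply, innerSL_apply_apply, real_inner_smul_left,
    ContinuousLinearMap.coe_smul', Pi.smul_apply, smul_eq_mul, h1]
  ring

lemma innerSL_smul (a : ℝ) (v : F) : innerSL ℝ (a • v) = a • innerSL ℝ v := by
  ext w; simp [real_inner_smul_left]

lemma innerSL_add (u v : F) : innerSL ℝ (u + v) = innerSL ℝ u + innerSL ℝ v := by
  ext w; simp [inner_add_left]

/-- Gradient of the radial function `y ↦ c * (‖y - z‖ ^ m - r)` at `x ≠ z`. -/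
lemma hasGradientAt_radial (z x : F) (hx : x ≠ z) (c r m : ℝ) :
    HasGradientAt (fun y : F => c * (‖y - z‖ ^ m - r))
      ((c * m * ‖x - z‖ ^ (m - 2)) • (x - z)) x := by
  apply hasGradientAt_of_innerSL
  have h := ((hasFDerivAt_norm_sub_rpow z x hx m).sub_const r).const_mul c
  convert h using 1
  · rfl
  · rfl
  rw [innerSL_smul, innerSL_smul, smul_smul, mul_assoc]

variable {N : ℕ}

/-- Gradient of `y ↦ K * ‖y - z‖ ^ m * ((y - z) j)` at `x ≠ z`. -/
lemma hasGradientAt_radial_mul_coord (z x : EuclideanSpace ℝ (Fin N)) (hx : x ≠ z)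
    (K m : ℝ) (j : Fin N) :
    HasGradientAt (fun y : EuclideanSpace ℝ (Fin N) => K * ‖y - z‖ ^ m * ((y - z) j))
      ((K * ‖x - z‖ ^ m) • EuclideanSpace.single j (1:ℝ) +
        (K * m * ‖x - z‖ ^ (m - 2) * ((x - z) j)) • (x - z)) x := by
  apply hasGradientAt_of_innerSL
  have hu : HasFDerivAt (fun y : EuclideanSpace ℝ (Fin N) => K * ‖y - z‖ ^ m)
      (innerSL ℝ ((K * m * ‖x - z‖ ^ (m - 2)) • (x - z))) x := by
    have h := (hasFDerivAt_norm_sub_rpow z x hx m).const_mul K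
    convert h using 1
    · rfl
    · rfl
    · rfl
    rw [innerSL_smul, innerSL_smul, smul_smul, mul_assoc]
  have hv : HasFDerivAt (fun y : EuclideanSpace ℝ (Fin N) => (y - z) j)
      (innerSL ℝ (EuclideanSpace.single j (1:ℝ))) x := by
    have h := ((innerSL ℝ (EuclideanSpace.single j (1:ℝ))).hasFDerivAt (x := x)).sub_const
      ((z : EuclideanSpace ℝ (Fin N)) j)
    convert h using 1
    · rfl
    · rfl
    · rfl
    funext y
    simp [EuclideanSpace.inner_single_left]
  have h := hu.mul hv
  convert h using 1
  · rfl
  · rfl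
  · rfl
  rw [innerSL_add, innerSL_smul, innerSL_smul, innerSL_smul]
  simp only [smul_smul]
  ring_nf

/-- The Hessian matrix of `w` at `x`: entry `(i,j)` is `∂²w/∂xᵢ∂xⱼ`. -/
noncomputable def hess {N : ℕ} (w : EuclideanSpace ℝ (Fin N) → ℝ) (x : EuclideanSpace ℝ (Fin N)) :
    Matrix (Fin N) (Fin N) ℝ :=
  fun i j => gradient (fun y => gradient w y j) x i

/-- The square of the Frobenius norm of a matrix. -/
noncomputable def frobSq {n : ℕ} (A : Matrix (Fin n) (Fin n) ℝ) : ℝ :=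
  ∑ i, ∑ j, (A i j)^2

/-- **Equality in Newton's inequality for the radial solution** (Lemma 2.6(i) of the paper).
For `w_r(x) = -((p-1)/(p N^{1/(p-1)}))(|x-z|^{p/(p-1)} - r)`, `1 < p < 2`, and `x ≠ z`, with
`e = (x-z)/|x-z|`: `D²w_r(x) = -N^{-1/(p-1)} |x-z|^{(2-p)/(p-1)} (((2-p)/(p-1)) e⊗e + I)`,
`|∇w_r(x)|^{p-2} (I + (p-2) e⊗e) D²w_r(x) = -(1/N) I`, and this matrix `A` satisfies
`‖A‖² = (Tr A)²/N`, i.e. equality holds in Newton's inequality. -/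
theorem radial_solution_newton_equality (N : ℕ) (hN : 2 ≤ N) (p : ℝ) (hp1 : 1 < p) (hp2 : p < 2)
    (z : EuclideanSpace ℝ (Fin N)) (r : ℝ)
    (w : EuclideanSpace ℝ (Fin N) → ℝ)
    (hw : ∀ x, w x = -((p - 1) / (p * (N : ℝ) ^ ((1 : ℝ) / (p - 1)))) *
        (‖x - z‖ ^ (p / (p - 1)) - r))
    (x : EuclideanSpace ℝ (Fin N)) (hx : x ≠ z) :
    let e : Fin N → ℝ := fun i => (x - z) i / ‖x - z‖
    let A : Matrix (Fin N) (Fin N) ℝ :=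
      ‖gradient w x‖ ^ (p - 2) •
        (((1 : Matrix (Fin N) (Fin N) ℝ) + (p - 2) • Matrix.vecMulVec e e) * hess w x)
    hess w x = (-((N : ℝ) ^ (-((1 : ℝ) / (p - 1))) * ‖x - z‖ ^ ((2 - p) / (p - 1)))) •
        (((2 - p) / (p - 1)) • Matrix.vecMulVec e e + (1 : Matrix (Fin N) (Fin N) ℝ)) ∧
      A = (-(1 / (N : ℝ))) • (1 : Matrix (Fin N) (Fin N) ℝ) ∧
      frobSq A = (A.trace) ^ 2 / (N : ℝ) := by
  intro e A
  have hp1' : (0:ℝ) < p - 1 := by linarith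
  have hp0 : (0:ℝ) < p := by linarith
  have hn : (0:ℝ) < (N:ℝ) := by
    have : 0 < N := lt_of_lt_of_le (by norm_num) hN
    exact_mod_cast this
  have hd : (0:ℝ) < ‖x - z‖ := norm_pos_iff.mpr (sub_ne_zero.mpr hx)
  set n : ℝ := (N:ℝ) with hn_def
  set d : ℝ := ‖x - z‖ with hd_def
  set m : ℝ := (2 - p) / (p - 1) with hm_def
  set K : ℝ := -(n ^ (-((1:ℝ) / (p - 1)))) with hK_def
  set c : ℝ := -((p - 1) / (p * n ^ ((1:ℝ) / (p - 1)))) with hc_def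
  have hX : (0:ℝ) < n ^ ((1:ℝ) / (p - 1)) := Real.rpow_pos_of_pos hn _
  have hcK : c * (p / (p - 1)) = K := by
    rw [hc_def, hK_def, Real.rpow_neg hn.le]
    field_simp
  have hm2 : p / (p - 1) - 2 = m := by
    rw [hm_def]; field_simp; ring
  have hwfun : w = fun y => c * (‖y - z‖ ^ (p / (p - 1)) - r) := funext hw
  -- gradient formula
  have hgrad : ∀ y, y ≠ z → HasGradientAt w ((K * ‖y - z‖ ^ m) • (y - z)) y := by
    intro y hy
    have h := hasGradientAt_radial z y hy c r (p / (p - 1))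
    rw [← hwfun] at h
    rw [show K * ‖y - z‖ ^ m = c * (p / (p - 1)) * ‖y - z‖ ^ (p / (p - 1) - 2) by
      rw [hcK, hm2]]
    exact h
  -- Hessian entries
  have hE : ∀ i j, hess w x i j =
      (K * d ^ m) * (if i = j then 1 else 0)
        + (K * m * d ^ (m - 2) * ((x - z) j)) * ((x - z) i) := by
    intro i j
    have hR := hasGradientAt_radial_mul_coord z x hx K m j
    have hEv : (fun y => gradient w y j) =ᶠ[nhds x]
        (fun y => K * ‖y - z‖ ^ m * ((y - z) j)) := by
      filter_upwards [isOpen_ne.mem_nhds hx] with y hy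
      rw [(hgrad y hy).gradient]
      simp [smul_eq_mul]
    have h := hR.congr_of_eventuallyEq hEv
    show gradient (fun y => gradient w y j) x i = _
    rw [h.gradient]
    simp [EuclideanSpace.single_apply, smul_eq_mul]
    rfl
  -- statement 1
  have h1 : hess w x = (-(n ^ (-((1:ℝ) / (p - 1))) * d ^ m)) •
      (m • Matrix.vecMulVec e e + (1 : Matrix (Fin N) (Fin N) ℝ)) := by
    ext i j
    rw [hE i j]
    have hdm : d ^ (m - 2) = d ^ m / (d * d) := by
      rw [Real.rpow_sub hd]
      congr 1
      rw [show (2:ℝ) = ((2:ℕ):ℝ) by norm_num, Real.rpow_natCast]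
      ring
    simp only [Matrix.smul_apply, Matrix.add_apply, Matrix.one_apply,
      Matrix.vecMulVec_apply, smul_eq_mul, hdm, hK_def]
    have he_i : e i = (x - z) i / d := rfl
    have he_j : e j = (x - z) j / d := rfl
    rw [he_i, he_j]
    rcases eq_or_ne i j with hij | hij <;> simp only [hij, if_pos, if_neg, ite_true,
      ite_false, if_true, if_false] <;> field_simp <;> ring
  -- gradient norm and scalar computation
  have hgx : gradient w x = (K * d ^ m) • (x - z) := (hgrad x hx).gradient
  have habsK : |K| = n ^ (-((1:ℝ) / (p - 1))) := by
    rw [hK_def, abs_neg, abs_of_pos (Real.rpow_pos_of_pos hn _)]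
  have hnormg : ‖gradient w x‖ = n ^ (-((1:ℝ) / (p - 1))) * d ^ (m + 1) := by
    rw [hgx, norm_smul, Real.norm_eq_abs, ← hd_def, abs_mul, habsK,
      abs_of_pos (Real.rpow_pos_of_pos hd _), Real.rpow_add_one hd.ne']
    ring
  have hscal : ‖gradient w x‖ ^ (p - 2) * (K * d ^ m) = -(1 / n) := by
    rw [hnormg, Real.mul_rpow (Real.rpow_pos_of_pos hn _).le (Real.rpow_pos_of_pos hd _).le,
      ← Real.rpow_mul hn.le, ← Real.rpow_mul hd.le, hK_def]
    have e1 : -((1:ℝ) / (p - 1)) * (p - 2) + -((1:ℝ) / (p - 1)) = -1 := by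
      field_simp
      ring
    have e2 : (m + 1) * (p - 2) + m = 0 := by
      rw [hm_def]; field_simp; ring
    calc n ^ (-((1:ℝ) / (p - 1)) * (p - 2)) * d ^ ((m + 1) * (p - 2)) *
          (-n ^ (-((1:ℝ) / (p - 1))) * d ^ m)
        = -(n ^ (-((1:ℝ) / (p - 1)) * (p - 2)) * n ^ (-((1:ℝ) / (p - 1))) *
            (d ^ ((m + 1) * (p - 2)) * d ^ m)) := by ring
      _ = -(n ^ ((-1:ℝ)) * d ^ ((0:ℝ))) := by
            rw [← Real.rpow_add hn, ← Real.rpow_add hd, e1, e2]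
      _ = -(1 / n) := by
            rw [Real.rpow_zero, Real.rpow_neg_one]
            ring
  -- sum of squares of e is 1
  have hee : ∑ j, e j * e j = 1 := by
    have hnorm2 : ∑ j, ((x - z) j) * ((x - z) j) = d ^ (2:ℕ) := by
      rw [hd_def, EuclideanSpace.norm_eq, Real.sq_sqrt (by positivity)]
      exact Finset.sum_congr rfl fun j _ => by
        rw [Real.norm_eq_abs, sq_abs, sq]
    have : ∑ j, e j * e j = (∑ j, ((x - z) j) * ((x - z) j)) / (d * d) := by
      rw [Finset.sum_div]
      exact Finset.sum_congr rfl fun j _ => by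
        show (x - z) j / d * ((x - z) j / d) = _
        ring
    rw [this, hnorm2]
    field_simp
  -- statement 2
  have hz0 : m + (p - 2) + (p - 2) * m = 0 := by
    rw [hm_def]; field_simp; ring
  have hEe : ∀ i j, hess w x i j = (K * d ^ m) * (m * (e i * e j) + (if i = j then 1 else 0)) := by
    intro i j
    rw [h1]
    simp only [Matrix.smul_apply, Matrix.add_apply, Matrix.one_apply,
      Matrix.vecMulVec_apply, smul_eq_mul, hK_def]
    ring
  have h2 : A = (-(1 / n)) • (1 : Matrix (Fin N) (Fin N) ℝ) := by
    have hAdef : A = ‖gradient w x‖ ^ (p - 2) •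
        (((1 : Matrix (Fin N) (Fin N) ℝ) + (p - 2) • Matrix.vecMulVec e e) * hess w x) := rfl
    ext i k
    rw [hAdef]
    simp only [Matrix.smul_apply, Matrix.mul_apply, Matrix.add_apply, Matrix.one_apply,
      Matrix.vecMulVec_apply, smul_eq_mul]
    have hsplit : ∀ j, ((if i = j then (1:ℝ) else 0) + (p - 2) * (e i * e j)) * (hess w x j k)
        = (if i = j then (K * d ^ m) * (m * (e j * e k) + (if j = k then 1 else 0)) else 0)
          + ((p - 2) * (K * d ^ m) * m * (e i * e k)) * (e j * e j)
          + (if j = k then (p - 2) * (e i * e j) * (K * d ^ m) else 0) := by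
      intro j
      rw [hEe j k]
      split_ifs <;> ring
    rw [Finset.sum_congr rfl fun j _ => hsplit j]
    rw [Finset.sum_add_distrib, Finset.sum_add_distrib, Finset.sum_ite_eq, ← Finset.mul_sum,
      hee, Finset.sum_ite_eq']
    simp only [Finset.mem_univ, if_true, mul_one]
    have key : ∀ (C S M E δ nn : ℝ), C * S = -(1/nn) → M + (p - 2) + (p - 2) * M = 0 →
        C * (S * (M * E + δ) + (p - 2) * S * M * E + (p - 2) * E * S) = -(1/nn) * δ := by
      intro C S M E δ nn hA hB
      linear_combination (M * E + δ + (p - 2) * M * E + (p - 2) * E) * hA - E / nn * hB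
    exact key _ _ _ _ _ _ hscal hz0
  refine ⟨h1, h2, ?_⟩
  -- statement 3
  rw [h2]
  have hfs : frobSq ((-(1 / n)) • (1 : Matrix (Fin N) (Fin N) ℝ)) = (N:ℝ) * (1 / n) ^ 2 := by
    have hrow : ∀ i : Fin N, ∑ j, (((-(1 / n)) • (1 : Matrix (Fin N) (Fin N) ℝ)) i j) ^ 2
        = (1 / n) ^ 2 := by
      intro i
      have hterm : ∀ j, (((-(1 / n)) • (1 : Matrix (Fin N) (Fin N) ℝ)) i j) ^ 2
          = if i = j then (1 / n) ^ 2 else 0 := by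
        intro j
        simp only [Matrix.smul_apply, Matrix.one_apply, smul_eq_mul]
        split_ifs <;> ring
      rw [Finset.sum_congr rfl fun j _ => hterm j]
      simp
    simp only [frobSq]
    rw [Finset.sum_congr rfl fun i _ => hrow i]
    simp [Finset.card_univ]
  have htr : ((-(1 / n)) • (1 : Matrix (Fin N) (Fin N) ℝ)).trace = (N:ℝ) * (-(1 / n)) := by
    rw [Matrix.trace_smul, Matrix.trace_one]
    simp [Finset.card_univ]
    ring
  rw [hfs, htr]
  field_simp
  ring
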